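/- If T is a hypercyclic and multiply recurrent continuous linear operator on a separable Fréchet space, then every hypercyclic vector for T is an AP-hypercyclic vector, i.e., for every hypercyclic vector x and every nonempty open set U, the return set N_T(x,U) contains arbitrarily long arithmetic progressions. -/

import Mathlib

open Filter Topology

def ContainsAPs (A : Set ℕ) : Prop :=
  ∀ m : ℕ, ∃ a k : ℕ, 1 ≤ a ∧ 1 ≤ k ∧ ∀ j ≤ m, a + j * k ∈ A

theorem hypercyclic_multiplyRecurrent_implies_every_HC_vector_is_AP
    {X : Type*} [AddCommGroup X] [Module ℝ X] [UniformSpace X] [IsUniformAddGroup X]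
    [ContinuousSMul ℝ X] [LocallyConvexSpace ℝ X] [CompleteSpace X]
    [TopologicalSpace.MetrizableSpace X] [TopologicalSpace.SeparableSpace X]
    (T : X →L[ℝ] X)
    (hhc : ∃ x : X, Dense (Set.range fun n : ℕ => (T ^ n) x))
    (hmr : ∀ U : Set X, IsOpen U → U.Nonempty → ∀ m : ℕ,
        ∃ k : ℕ, 1 ≤ k ∧ ∃ x ∈ U, ∀ j ≤ m, (T ^ (j * k)) x ∈ U) :
    ∀ x : X, Dense (Set.range fun n : ℕ => (T ^ n) x) →
      ∀ U : Set X, IsOpen U → U.Nonempty → ContainsAPs {n : ℕ | (T ^ n) x ∈ U} := by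
  intro x hd U hU hUne m
  obtain ⟨k, hk1, y, hyU, hy⟩ := hmr U hU hUne (m + 1)
  set V : Set X := ⋂ j ∈ Finset.range (m + 2), (T ^ (j * k)) ⁻¹' U with hV
  have hVopen : IsOpen V := by
    apply isOpen_biInter_finset
    intro j _
    exact (T ^ (j * k)).continuous.isOpen_preimage U hU
  have hyV : y ∈ V := by
    simp only [hV, Set.mem_iInter, Set.mem_preimage, Finset.mem_range]
    intro j hj
    exact hy j (Nat.lt_succ_iff.mp hj)
  obtain ⟨z, hz, hzV⟩ := hd.exists_mem_open hVopen ⟨y, hyV⟩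
  obtain ⟨n, rfl⟩ := hz
  refine ⟨n + k, k, le_add_self.trans (le_refl _) |>.trans' hk1, hk1, ?_⟩
  intro j hj
  have hjmem : (j + 1) ∈ Finset.range (m + 2) := by
    simp; omega
  have := Set.mem_iInter₂.mp hzV (j + 1) hjmem
  simp only [Set.mem_preimage] at this
  have harith : n + k + j * k = (j + 1) * k + n := by ring
  show (T ^ (n + k + j * k)) x ∈ U
  rw [harith, pow_add, ContinuousLinearMap.mul_apply]
  exact this
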